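/- Let φ be a propositional BI formula built from atoms R_{r₀} (for consumable resources r₀), the constants ⊤ and emp, and the connectives ∧, ∨, → and * (in particular, φ does not contain the multiplicative implication —∗). Then for every consumable resource r and every environment η: r ⊨_bi φ in the affine intuitionistic BI semantics over (𝓡, ⊑, ·, e) if and only if η, (∅, r) ⊨ φ in the heap-and-resource semantics at the empty heap ∅. -/
import Mathlib


/-- An ordered commutative monoid of consumable resources, whose unit is the
least element and whose operation is monotone. -/
structure ResMon : Type 1 where
  carrier : Type
  le : carrier → carrier → Prop
  op : carrier → carrier → carrier
  e : carrier
  le_refl : ∀ r, le r r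
  le_trans : ∀ {a b c}, le a b → le b c → le a c
  op_comm : ∀ a b, op a b = op b a
  op_assoc : ∀ a b c, op (op a b) c = op a (op b c)
  op_e : ∀ a, op a e = a
  e_le : ∀ a, le e a
  op_mono : ∀ {a b c d}, le a b → le c d → le (op a c) (op b d)

/-- Values: possibly-null addresses and integers. -/
inductive Val (A : Type) where
  | addr : Option A → Val A
  | int : ℤ → Val A

/-- The null value. -/
def Val.null {A : Type} : Val A := .addr none

/-- Heaps: finite partial maps from (address, field name) pairs to values. -/
abbrev Heap (A F : Type) : Type := Finmap (fun _ : A × F => Val A)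

/-- Terms of the assertion logic: logical variables and the constant null. -/
inductive Term where
  | var (x : ℕ)
  | null

/-- Interpretation of terms in an environment. -/
def Term.eval {A : Type} (η : ℕ → Val A) : Term → Val A
  | .var x => η x
  | .null => .addr none

/-- Formulae of the deep assertion logic. -/
inductive Formula (F R : Type) where
  | tt
  | eq (t₁ t₂ : Term)
  | ne (t₁ t₂ : Term)
  | and (φ₁ φ₂ : Formula F R)
  | or (φ₁ φ₂ : Formula F R)
  | imp (φ₁ φ₂ : Formula F R)
  | emp
  | star (φ₁ φ₂ : Formula F R)
  | wand (φ₁ φ₂ : Formula F R)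
  | all (x : ℕ) (φ : Formula F R)
  | ex (x : ℕ) (φ : Formula F R)
  | points (t₁ : Term) (f : F) (t₂ : Term)
  | res (r : R)

/-- The semantics of the deep assertion logic (Figure 6):
`Sat M φ η H r` is `η, (H, r) ⊨ φ`. -/
def Sat (M : ResMon) {A F : Type} [DecidableEq A] [DecidableEq F] :
    Formula F M.carrier → (ℕ → Val A) → Heap A F → M.carrier → Prop
  | .tt => fun _ _ _ => True
  | .eq t₁ t₂ => fun η _ _ => t₁.eval η = t₂.eval η
  | .ne t₁ t₂ => fun η _ _ => t₁.eval η ≠ t₂.eval η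
  | .and φ₁ φ₂ => fun η H r => Sat M φ₁ η H r ∧ Sat M φ₂ η H r
  | .or φ₁ φ₂ => fun η H r => Sat M φ₁ η H r ∨ Sat M φ₂ η H r
  | .imp φ₁ φ₂ => fun η H r => ∀ r', M.le r r' → Sat M φ₁ η H r' → Sat M φ₂ η H r'
  | .emp => fun _ H _ => H = ∅
  | .star φ₁ φ₂ => fun η H r =>
      ∃ (H₁ H₂ : Heap A F) (r₁ r₂ : M.carrier),
        H₁.Disjoint H₂ ∧ H₁ ∪ H₂ = H ∧ M.le (M.op r₁ r₂) r ∧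
        Sat M φ₁ η H₁ r₁ ∧ Sat M φ₂ η H₂ r₂
  | .wand φ₁ φ₂ => fun η H r =>
      ∀ (H' H'' : Heap A F) (r' r'' : M.carrier),
        H.Disjoint H' → H ∪ H' = H'' → M.le (M.op r r') r'' →
        Sat M φ₁ η H' r' → Sat M φ₂ η H'' r''
  | .all x φ => fun η H r => ∀ v : Val A, Sat M φ (Function.update η x v) H r
  | .ex x φ => fun η H r => ∃ v : Val A, Sat M φ (Function.update η x v) H r
  | .points t₁ f t₂ => fun η H _ =>
      ∃ a : A, t₁.eval η = .addr (some a) ∧ H = Finmap.singleton (a, f) (t₂.eval η)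
  | .res r₀ => fun _ H r => H = ∅ ∧ M.le r₀ r

/-- Propositional BI formulae over resource atoms (no magic wand). -/
inductive BIForm (R : Type) where
  | tt
  | emp
  | res (r : R)
  | and (φ₁ φ₂ : BIForm R)
  | or (φ₁ φ₂ : BIForm R)
  | imp (φ₁ φ₂ : BIForm R)
  | star (φ₁ φ₂ : BIForm R)

/-- The affine intuitionistic BI semantics over the resource monoid alone:
`BISat M φ r` is `r ⊨_bi φ`. -/
def BISat (M : ResMon) : BIForm M.carrier → M.carrier → Prop
  | .tt => fun _ => True
  | .emp => fun _ => True
  | .res r₀ => fun r => M.le r₀ r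
  | .and φ₁ φ₂ => fun r => BISat M φ₁ r ∧ BISat M φ₂ r
  | .or φ₁ φ₂ => fun r => BISat M φ₁ r ∨ BISat M φ₂ r
  | .imp φ₁ φ₂ => fun r => ∀ r', M.le r r' → BISat M φ₁ r' → BISat M φ₂ r'
  | .star φ₁ φ₂ => fun r =>
      ∃ r₁ r₂, M.le (M.op r₁ r₂) r ∧ BISat M φ₁ r₁ ∧ BISat M φ₂ r₂

/-- The inclusion of propositional BI formulae into the deep assertion logic. -/
def BIForm.toFormula {F R : Type} : BIForm R → Formula F R
  | .tt => .tt
  | .emp => .emp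
  | .res r₀ => .res r₀
  | .and φ₁ φ₂ => .and φ₁.toFormula φ₂.toFormula
  | .or φ₁ φ₂ => .or φ₁.toFormula φ₂.toFormula
  | .imp φ₁ φ₂ => .imp φ₁.toFormula φ₂.toFormula
  | .star φ₁ φ₂ => .star φ₁.toFormula φ₂.toFormula

/-- **Proposition.** For a propositional BI formula `φ` with only resource atoms,
`r ⊨_bi φ` iff `η, (∅, r) ⊨ φ` in the heap-and-resource semantics at the empty
heap. -/
lemma union_empty_left {A F : Type} [DecidableEq A] [DecidableEq F]
    {H₁ H₂ : Heap A F} (h : H₁ ∪ H₂ = ∅) : H₁ = ∅ ∧ H₂ = ∅ := by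
  have key : ∀ x : A × F, x ∉ H₁ ∧ x ∉ H₂ := by
    intro x
    have : x ∉ H₁ ∪ H₂ := by rw [h]; exact Finmap.notMem_empty
    rw [Finmap.mem_union] at this
    push_neg at this
    exact this
  constructor
  · apply Finmap.ext_lookup
    intro x
    rw [Finmap.lookup_eq_none.2 (key x).1, Finmap.lookup_empty]
  · apply Finmap.ext_lookup
    intro x
    rw [Finmap.lookup_eq_none.2 (key x).2, Finmap.lookup_empty]

theorem bi_sublogic (M : ResMon) {A F : Type} [DecidableEq A] [DecidableEq F]
    (φ : BIForm M.carrier) (r : M.carrier) (η : ℕ → Val A) :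
    BISat M φ r ↔ Sat M (BIForm.toFormula φ : Formula F M.carrier) η (∅ : Heap A F) r := by
  induction φ generalizing r with
  | tt => simp [BISat, BIForm.toFormula, Sat]
  | emp => simp [BISat, BIForm.toFormula, Sat]
  | res r₀ => simp [BISat, BIForm.toFormula, Sat]
  | and φ₁ φ₂ ih₁ ih₂ =>
    simp only [BISat, BIForm.toFormula, Sat, ih₁, ih₂]
  | or φ₁ φ₂ ih₁ ih₂ =>
    simp only [BISat, BIForm.toFormula, Sat, ih₁, ih₂]
  | imp φ₁ φ₂ ih₁ ih₂ =>
    simp only [BISat, BIForm.toFormula, Sat]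
    constructor
    · intro h r' hle h1; exact (ih₂ r').1 (h r' hle ((ih₁ r').2 h1))
    · intro h r' hle h1; exact (ih₂ r').2 (h r' hle ((ih₁ r').1 h1))
  | star φ₁ φ₂ ih₁ ih₂ =>
    simp only [BISat, BIForm.toFormula, Sat]
    constructor
    · rintro ⟨r₁, r₂, hle, h1, h2⟩
      exact ⟨∅, ∅, r₁, r₂, fun x hx => absurd hx Finmap.notMem_empty, by simp, hle,
        (ih₁ r₁).1 h1, (ih₂ r₂).1 h2⟩
    · rintro ⟨H₁, H₂, r₁, r₂, _, hu, hle, h1, h2⟩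
      obtain ⟨e1, e2⟩ := union_empty_left hu
      subst e1; subst e2
      exact ⟨r₁, r₂, hle, (ih₁ r₁).2 h1, (ih₂ r₂).2 h2⟩
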